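/- For all complex numbers a, b and all t in the open unit disc for which all series converge, the Euler transformation holds: ₂F₁(a, b; c; t) = (1−t)^{c−a−b} · ₂F₁(c−a, c−b; c; t), where ₂F₁(a,b;c;t) = Σ_{k≥0} ((a)_k (b)_k / ((c)_k k!)) t^k with (x)_k the Pochhammer symbol, provided c is not a nonpositive integer. -/

import Mathlib

open Polynomial

open Filter Finset Topology

namespace EulerTrAux

noncomputable def P (k : ℕ) (x : ℂ) : ℂ := (ascPochhammer ℂ k).eval x

lemma P_zero (x : ℂ) : P 0 x = 1 := by simp [P]

lemma P_succ (k : ℕ) (x : ℂ) : P (k+1) x = P k x * (x + k) :=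
  ascPochhammer_succ_eval k x

lemma P_ne_zero {z : ℂ} (hz : ∀ n : ℕ, z ≠ -(n:ℂ)) (k : ℕ) : P k z ≠ 0 := by
  induction k with
  | zero => simp [P_zero]
  | succ k ih =>
    rw [P_succ]
    refine mul_ne_zero ih fun h => hz k ?_
    exact eq_neg_of_add_eq_zero_left h

/-- The `₂F₁(p,q;c)` coefficient. -/
noncomputable def V (p q c : ℂ) (k : ℕ) : ℂ := P k p * P k q / (P k c * (k.factorial : ℂ))

/-- The binomial series coefficient. -/
noncomputable def B (e : ℂ) (j : ℕ) : ℂ := P j e / (j.factorial : ℂ)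

lemma B_zero (e : ℂ) : B e 0 = 1 := by simp [B, P_zero]

lemma V_zero (p q c : ℂ) : V p q c 0 = 1 := by simp [V, P_zero]

lemma B_succ (e : ℂ) (j : ℕ) : ((j:ℂ)+1) * B e (j+1) = (e + j) * B e j := by
  have hf : ((j.factorial : ℂ)) ≠ 0 := Nat.cast_ne_zero.mpr j.factorial_ne_zero
  have hj1 : ((j:ℂ)+1) ≠ 0 := by
    have := Nat.cast_add_one_ne_zero (R := ℂ) j
    simpa using this
  rw [B, B, P_succ]
  rw [Nat.factorial_succ]
  push_cast
  field_simp

lemma V_succ (p q c : ℂ) (hc : ∀ n : ℕ, c ≠ -(n:ℂ)) (k : ℕ) :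
    ((k:ℂ)+1) * (c+k) * V p q c (k+1) = (p+k) * (q+k) * V p q c k := by
  have hf : ((k.factorial : ℂ)) ≠ 0 := Nat.cast_ne_zero.mpr k.factorial_ne_zero
  have hk1 : ((k:ℂ)+1) ≠ 0 := by
    have := Nat.cast_add_one_ne_zero (R := ℂ) k
    simpa using this
  have hck : (c + (k:ℂ)) ≠ 0 := fun h => hc k (eq_neg_of_add_eq_zero_left h)
  have hPc : P k c ≠ 0 := P_ne_zero hc k
  rw [V, V, P_succ, P_succ, P_succ, Nat.factorial_succ]
  push_cast
  field_simp

/-- The per-`k` telescoping identity (Euler transformation certificate). -/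
lemma telescope (p q c : ℂ) (hc : ∀ n : ℕ, c ≠ -(n:ℂ)) (n j k : ℕ) (hjk : j + k = n) :
    ((n:ℂ)+1) * (c+n) * B (c-p-q) (j+1) * V p q c k
      - (c-p+n) * (c-q+n) * B (c-p-q) j * V p q c k
    = (-(((k:ℂ)+1) * (c+k)) * (B (c-p-q) j * V p q c (k+1)))
      - (-((k:ℂ) * (c+k-1)) * (B (c-p-q) (j+1) * V p q c k)) := by
  have hj1 : ((j:ℂ)+1) ≠ 0 := by
    have := Nat.cast_add_one_ne_zero (R := ℂ) j
    simpa using this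
  have hB := B_succ (c-p-q) j
  have hV := V_succ p q c hc k
  have hn : (n:ℂ) = (j:ℂ) + k := by exact_mod_cast (congrArg (Nat.cast : ℕ → ℂ) hjk).symm
  have hk1 : ((k:ℂ)+1) ≠ 0 := by
    have := Nat.cast_add_one_ne_zero (R := ℂ) k
    simpa using this
  have hck : (c + (k:ℂ)) ≠ 0 := fun h => hc k (eq_neg_of_add_eq_zero_left h)
  have hBj : B (c-p-q) (j+1) = (c-p-q+(j:ℂ)) * B (c-p-q) j / ((j:ℂ)+1) := by
    rw [eq_div_iff hj1]; linear_combination hB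
  have hVk : V p q c (k+1) = (p+(k:ℂ)) * (q+(k:ℂ)) * V p q c k / (((k:ℂ)+1) * (c+k)) := by
    rw [eq_div_iff (mul_ne_zero hk1 hck)]; linear_combination hV
  rw [hn, hBj, hVk]
  field_simp
  ring

/-- Convolution of binomial series with `₂F₁(p,q;c)` gives `₂F₁(c-p,c-q;c)`. -/
lemma conv_eq (p q c : ℂ) (hc : ∀ n : ℕ, c ≠ -(n:ℂ)) (n : ℕ) :
    ∑ k ∈ Finset.range (n+1), B (c-p-q) (n-k) * V p q c k = V (c-p) (c-q) c n := by
  induction n with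
  | zero => simp [B_zero, V_zero]
  | succ n ih =>
    have hn1 : ((n:ℂ)+1) ≠ 0 := by
      have := Nat.cast_add_one_ne_zero (R := ℂ) n
      simpa using this
    have hcn : (c+(n:ℂ)) ≠ 0 := fun h => hc n (eq_neg_of_add_eq_zero_left h)
    set T : ℕ → ℂ := fun k => -((k:ℂ) * (c+k-1)) * (B (c-p-q) (n+1-k) * V p q c k) with hT
    have tele : ∀ k ∈ Finset.range (n+1),
        ((n:ℂ)+1) * (c+n) * (B (c-p-q) (n+1-k) * V p q c k)
          - (c-p+n) * (c-q+n) * (B (c-p-q) (n-k) * V p q c k)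
        = T (k+1) - T k := by
      intro k hk
      have hkn : k ≤ n := Nat.lt_succ_iff.mp (Finset.mem_range.mp hk)
      have h1 : n + 1 - k = (n - k) + 1 := by omega
      have h2 : n + 1 - (k+1) = n - k := by omega
      have := telescope p q c hc n (n-k) k (by omega)
      simp only [hT, h1, h2]
      push_cast
      linear_combination this
    have hsum :
        ∑ k ∈ Finset.range (n+1), ((n:ℂ)+1) * (c+n) * (B (c-p-q) (n+1-k) * V p q c k)
          - ∑ k ∈ Finset.range (n+1), (c-p+n) * (c-q+n) * (B (c-p-q) (n-k) * V p q c k)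
        = T (n+1) - T 0 := by
      rw [← Finset.sum_sub_distrib, Finset.sum_congr rfl tele, Finset.sum_range_sub T]
    have hT0 : T 0 = 0 := by simp [hT]
    have hTn : T (n+1) = -(((n:ℂ)+1) * (c+n)) * V p q c (n+1) := by
      simp only [hT, Nat.sub_self, B_zero]
      push_cast
      ring
    have key : ((n:ℂ)+1) * (c+n) * (∑ k ∈ Finset.range (n+1+1), B (c-p-q) (n+1-k) * V p q c k)
        = (c-p+n) * (c-q+n) * ∑ k ∈ Finset.range (n+1), B (c-p-q) (n-k) * V p q c k := by
      rw [Finset.sum_range_succ, Nat.sub_self, B_zero, mul_add, Finset.mul_sum, Finset.mul_sum]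
      rw [hT0, hTn] at hsum
      linear_combination hsum
    have hu := V_succ (c-p) (c-q) c hc n
    apply mul_left_cancel₀ (mul_ne_zero hn1 hcn)
    rw [key, ih]
    linear_combination -hu

lemma tend_div (x y : ℂ) :
    Tendsto (fun k : ℕ => (x + k) / (y + k)) atTop (𝓝 1) := by
  have h0 : Tendsto (fun k : ℕ => (x - y) / (y + k)) atTop (𝓝 0) := by
    have hg : Tendsto (fun k : ℕ => ‖x - y‖ / ((k:ℝ) - ‖y‖)) atTop (𝓝 0) := by
      apply Tendsto.div_atTop tendsto_const_nhds
      have h : Tendsto (fun k : ℕ => (k:ℝ)) atTop atTop := tendsto_natCast_atTop_atTop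
      exact (tendsto_atTop_add_const_right atTop (-‖y‖) h).congr (fun k => by ring)
    have hbound : ∀ᶠ k : ℕ in atTop, ‖(x - y) / (y + k)‖ ≤ ‖x - y‖ / ((k:ℝ) - ‖y‖) := by
      filter_upwards [eventually_gt_atTop ⌈‖y‖⌉₊] with k hk
      have hky : ‖y‖ < (k:ℝ) := lt_of_le_of_lt (Nat.le_ceil _) (by exact_mod_cast hk)
      have hpos : (0:ℝ) < (k:ℝ) - ‖y‖ := by linarith
      have hnorm : (k:ℝ) - ‖y‖ ≤ ‖y + (k:ℂ)‖ := by
        have h2 : ‖(k:ℂ)‖ ≤ ‖y + (k:ℂ)‖ + ‖y‖ := by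
          have h3 := norm_sub_le (y + (k:ℂ)) y
          simpa using h3
        have h4 : ‖(k:ℂ)‖ = (k:ℝ) := by simp
        linarith
      rw [norm_div]
      exact div_le_div_of_nonneg_left (norm_nonneg _) hpos hnorm
    exact squeeze_zero_norm' hbound hg
  have h1 : Tendsto (fun k : ℕ => 1 + (x - y) / (y + k)) atTop (𝓝 1) := by
    simpa using (tendsto_const_nhds (x := (1:ℂ)) (f := atTop)).add h0
  apply h1.congr'
  filter_upwards [eventually_gt_atTop ⌈‖y‖⌉₊] with k hk
  have hky : ‖y‖ < (k:ℝ) := lt_of_le_of_lt (Nat.le_ceil _) (by exact_mod_cast hk)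
  have hyk : y + (k:ℂ) ≠ 0 := by
    intro h
    have : y = -(k:ℂ) := eq_neg_of_add_eq_zero_left h
    rw [this] at hky
    simp at hky
  field_simp
  ring

lemma summable_norm_of_rec {f m : ℕ → ℂ} {t : ℂ} (ht : ‖t‖ < 1)
    (hrec : ∀ k, f (k+1) = m k * t * f k)
    (hm : Tendsto m atTop (𝓝 1)) : Summable fun k => ‖f k‖ := by
  set r : ℝ := (1 + ‖t‖)/2 with hr
  have hr1 : r < 1 := by rw [hr]; linarith
  have htr : ‖t‖ < r := by rw [hr]; linarith
  have hmt : Tendsto (fun k => ‖m k * t‖) atTop (𝓝 ‖t‖) := by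
    have := (hm.mul_const t).norm
    simpa using this
  have hev : ∀ᶠ k in atTop, ‖m k * t‖ ≤ r := hmt.eventually_le_const htr
  apply summable_of_ratio_norm_eventually_le hr1
  filter_upwards [hev] with k hk
  rw [Real.norm_eq_abs, Real.norm_eq_abs, abs_of_nonneg (norm_nonneg _),
    abs_of_nonneg (norm_nonneg _), hrec k, norm_mul]
  exact mul_le_mul_of_nonneg_right hk (norm_nonneg _)

lemma cast_succ_ne (k : ℕ) : ((k:ℂ)+1) ≠ 0 := by
  have := Nat.cast_add_one_ne_zero (R := ℂ) k
  simpa using this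

lemma V_succ_div (p q c : ℂ) (hc : ∀ n : ℕ, c ≠ -(n:ℂ)) (k : ℕ) :
    V p q c (k+1) = (p+(k:ℂ)) * (q+(k:ℂ)) * V p q c k / (((k:ℂ)+1) * (c+k)) := by
  have hck : (c + (k:ℂ)) ≠ 0 := fun h => hc k (eq_neg_of_add_eq_zero_left h)
  rw [eq_div_iff (mul_ne_zero (cast_succ_ne k) hck)]
  linear_combination V_succ p q c hc k

lemma B_succ_div (e : ℂ) (j : ℕ) :
    B e (j+1) = (e+(j:ℂ)) * B e j / ((j:ℂ)+1) := by
  rw [eq_div_iff (cast_succ_ne j)]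
  linear_combination B_succ e j

lemma summable_norm_V (p q c : ℂ) (hc : ∀ n : ℕ, c ≠ -(n:ℂ)) {t : ℂ} (ht : ‖t‖ < 1) :
    Summable fun k : ℕ => ‖V p q c k * t ^ k‖ := by
  apply summable_norm_of_rec (m := fun k : ℕ => (p+(k:ℂ))/(c+k) * ((q+(k:ℂ))/(1+k))) ht
  · intro k
    have hck : (c + (k:ℂ)) ≠ 0 := fun h => hc k (eq_neg_of_add_eq_zero_left h)
    have hk1 : ((1:ℂ)+k) ≠ 0 := by
      have := cast_succ_ne k
      intro h; exact this (by linear_combination h)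
    have hk1' := cast_succ_ne k
    rw [V_succ_div p q c hc k, pow_succ]
    field_simp
    ring
  · have h := (tend_div p c).mul (tend_div q 1)
    simpa using h

lemma summable_norm_B (e : ℂ) {t : ℂ} (ht : ‖t‖ < 1) :
    Summable fun j : ℕ => ‖B e j * t ^ j‖ := by
  apply summable_norm_of_rec (m := fun j : ℕ => (e+(j:ℂ))/(1+j)) ht
  · intro j
    have hj1 : ((1:ℂ)+j) ≠ 0 := by
      have := cast_succ_ne j
      intro h; exact this (by linear_combination h)
    have hj1' := cast_succ_ne j
    rw [B_succ_div e j, pow_succ]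
    field_simp
    ring
  · have h := tend_div e 1
    simpa using h

lemma summable_norm_D (w : ℂ) {t : ℂ} (ht : ‖t‖ < 1) :
    Summable fun k : ℕ => ‖(w+(k:ℂ)) * B w k * t ^ k‖ := by
  apply summable_norm_of_rec (m := fun k : ℕ => (w+1+(k:ℂ))/(1+k)) ht
  · intro k
    have hk1 : ((1:ℂ)+k) ≠ 0 := by
      have := cast_succ_ne k
      intro h; exact this (by linear_combination h)
    have hk1' := cast_succ_ne k
    rw [B_succ_div w k]
    rw [pow_succ]
    push_cast
    field_simp
    ring
  · have h := tend_div (w+1) 1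
    simpa using h

lemma summable_D (w : ℂ) {y : ℂ} (hy : ‖y‖ < 1) :
    Summable fun k : ℕ => (w+(k:ℂ)) * B w k * y ^ k :=
  (summable_norm_D w hy).of_norm

lemma summable_Bser (w : ℂ) {y : ℂ} (hy : ‖y‖ < 1) :
    Summable fun k : ℕ => B w k * y ^ k :=
  (summable_norm_B w hy).of_norm

/-- The ODE + derivative step packaged: the binomial series sums to `(1-z)^(-w)`. -/
lemma binom_tsum (w : ℂ) {z : ℂ} (hz : ‖z‖ < 1) :
    ∑' k : ℕ, B w k * z ^ k = (1 - z) ^ (-w) := by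
  set f : ℂ → ℂ := fun y => ∑' k : ℕ, B w k * y ^ k with hfdef
  set S : ℂ → ℂ := fun y => ∑' k : ℕ, (w+(k:ℂ)) * B w k * y ^ k with hSdef
  have hfy : ∀ y : ℂ, f y = ∑' k : ℕ, B w k * y ^ k := fun _ => rfl
  have hSy : ∀ y : ℂ, S y = ∑' k : ℕ, (w+(k:ℂ)) * B w k * y ^ k := fun _ => rfl
  -- Step 1: derivative of f
  have hasDeriv : ∀ y : ℂ, ‖y‖ < 1 → HasDerivAt f (S y) y := by
    intro y hy
    set r : ℝ := (1 + ‖y‖)/2 with hrdef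
    have hr0 : 0 < r := by positivity
    have hr1 : r < 1 := by rw [hrdef]; linarith
    have hyr : ‖y‖ < r := by rw [hrdef]; linarith
    have hrC : ‖(r:ℂ)‖ < 1 := by
      rw [Complex.norm_real, Real.norm_eq_abs, abs_of_pos hr0]; exact hr1
    have hu1 : Summable (fun k : ℕ => ‖B w (k+1)‖ * ((k:ℝ)+1) * r ^ k) := by
      apply (summable_norm_D w hrC).congr
      intro k
      have hB := B_succ w k
      have h1 : ‖(w+(k:ℂ)) * B w k‖ = ‖(((k:ℂ))+1) * B w (k+1)‖ := by rw [hB]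
      have h2 : ‖((k:ℂ))+1‖ = (k:ℝ)+1 := by
        rw [show ((k:ℂ))+1 = (((k+1:ℕ)):ℂ) by push_cast; ring, Complex.norm_natCast]
        push_cast
        ring
      rw [norm_mul, h1, norm_mul, h2, norm_pow, Complex.norm_real, Real.norm_eq_abs,
        abs_of_pos hr0]
      ring
    have hu : Summable (fun k : ℕ => ‖B w k‖ * (k:ℝ) * r ^ (k-1)) := by
      apply (summable_nat_add_iff 1).1
      apply hu1.congr
      intro k
      simp only [Nat.add_sub_cancel]
      push_cast
      try ring
    have key := hasDerivAt_tsum_of_isPreconnected hu (Metric.isOpen_ball)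
      ((convex_ball (0:ℂ) r).isPreconnected)
      (g := fun (k : ℕ) (y : ℂ) => B w k * y ^ k)
      (g' := fun (k : ℕ) (x : ℂ) => B w k * ((k:ℂ) * x ^ (k-1)))
      (fun k x _ => (hasDerivAt_pow k x).const_mul (B w k))
      (fun k x hx => by
        have hxr : ‖x‖ < r := mem_ball_zero_iff.mp hx
        calc ‖B w k * ((k:ℂ) * x ^ (k-1))‖ = ‖B w k‖ * ((k:ℝ) * ‖x‖ ^ (k-1)) := by
              rw [norm_mul, norm_mul, norm_pow, Complex.norm_natCast]
          _ ≤ ‖B w k‖ * ((k:ℝ) * r ^ (k-1)) := by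
              gcongr
          _ = ‖B w k‖ * (k:ℝ) * r ^ (k-1) := by ring)
      (Metric.mem_ball_self hr0)
      (summable_of_ne_finset_zero (s := {0}) (fun k hk => by
        simp only [Finset.mem_singleton] at hk
        simp [zero_pow hk]))
      (mem_ball_zero_iff.mpr hyr)
    -- identify derivative sum with S y
    have hsumg : Summable (fun k : ℕ => B w k * ((k:ℂ) * y ^ (k-1))) := by
      apply (summable_nat_add_iff 1).1
      apply (summable_D w hy).congr
      intro k
      have hB := B_succ w k
      simp only [Nat.add_sub_cancel]
      push_cast
      linear_combination -(y ^ k) * hB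
    have hshift : S y = ∑' k : ℕ, B w k * ((k:ℂ) * y ^ (k-1)) := by
      rw [hsumg.tsum_eq_zero_add]
      simp only [Nat.cast_zero, zero_mul, mul_zero, zero_add]
      rw [hSy y]
      apply tsum_congr
      intro k
      have hB := B_succ w k
      simp only [Nat.add_sub_cancel]
      push_cast
      linear_combination -(y ^ k) * hB
    rw [hshift]
    exact key
  -- Step 2: the ODE
  have hODE : ∀ y : ℂ, ‖y‖ < 1 → (1 - y) * S y = w * f y := by
    intro y hy
    have hS : Summable (fun k : ℕ => (w+(k:ℂ)) * B w k * y ^ k) := summable_D w hy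
    have hSsh : Summable (fun k : ℕ => (w+((k:ℂ)+1)) * B w (k+1) * y ^ (k+1)) := by
      have := (summable_nat_add_iff 1).2 hS
      apply this.congr
      intro k
      push_cast
      ring
    have hyS : Summable (fun k : ℕ => (w+(k:ℂ)) * B w k * y ^ (k+1)) := by
      apply (hS.mul_left y).congr
      intro k
      ring
    have h1 : y * S y = ∑' k : ℕ, (w+(k:ℂ)) * B w k * y ^ (k+1) := by
      rw [hSy y, ← tsum_mul_left]
      apply tsum_congr; intro k; ring
    have h2 : S y = w + ∑' k : ℕ, (w+((k:ℂ)+1)) * B w (k+1) * y ^ (k+1) := by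
      rw [hSy y, hS.tsum_eq_zero_add]
      congr 1
      · simp [B_zero]
      · apply tsum_congr; intro k; push_cast; ring
    have h3 : ∑' k : ℕ, (w+((k:ℂ)+1)) * B w (k+1) * y ^ (k+1)
        - ∑' k : ℕ, (w+(k:ℂ)) * B w k * y ^ (k+1)
        = ∑' k : ℕ, w * (B w (k+1) * y ^ (k+1)) := by
      rw [← Summable.tsum_sub hSsh hyS]
      apply tsum_congr
      intro k
      have hB := B_succ w k
      linear_combination y ^ (k+1) * hB
    have h4 : w * f y = w + ∑' k : ℕ, w * (B w (k+1) * y ^ (k+1)) := by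
      have hfs : Summable (fun k : ℕ => B w k * y ^ k) := summable_Bser w hy
      rw [hfy y]
      rw [hfs.tsum_eq_zero_add, tsum_mul_left, mul_add]
      simp only [B_zero, pow_zero, mul_one]
    rw [sub_mul, one_mul, h1, h2, h4]
    rw [← h3]
    ring
  -- Step 3: phi is constant
  have hne : ∀ y : ℂ, ‖y‖ < 1 → (1:ℂ) - y ≠ 0 := by
    intro y hy h
    have h1 : y = 1 := by linear_combination -h
    rw [h1] at hy; simp at hy
  have hslit : ∀ y : ℂ, ‖y‖ < 1 → (1 - y) ∈ Complex.slitPlane := by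
    intro y hy
    left
    have := Complex.abs_re_le_norm y
    simp only [Complex.sub_re, Complex.one_re]
    have : y.re ≤ ‖y‖ := le_trans (le_abs_self _) this
    linarith
  set φ : ℂ → ℂ := fun y => f y * Complex.exp (w * Complex.log (1 - y)) with hφdef
  have hdφ : ∀ x ∈ Metric.ball (0:ℂ) 1, HasDerivAt φ 0 x := by
    intro x hx
    have hx1 : ‖x‖ < 1 := mem_ball_zero_iff.mp hx
    have hf' := hasDeriv x hx1
    have hconst : HasDerivAt (fun y : ℂ => 1 - y) (-1) x := by
      simpa using (hasDerivAt_id x).const_sub 1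
    have hl := (Complex.hasDerivAt_log (hslit x hx1)).comp x hconst
    have hexp := (hl.const_mul w).cexp
    have hprod := hf'.mul hexp
    have hSx : S x = w * f x / (1 - x) := by
      rw [eq_div_iff (hne x hx1)]
      linear_combination hODE x hx1
    refine hprod.congr_deriv ?_
    rw [hSx]
    field_simp
    ring
  have hconst : ∀ y : ℂ, ‖y‖ < 1 → φ y = φ 0 := by
    intro y hy
    apply (convex_ball (0:ℂ) 1).is_const_of_fderivWithin_eq_zero
      (f := φ) (fun x hx => ((hdφ x hx).differentiableAt).differentiableWithinAt)
      (fun x hx => by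
        rw [fderivWithin_of_isOpen Metric.isOpen_ball hx]
        have h5 := (hdφ x hx).hasFDerivAt.fderiv
        rw [h5]
        exact ContinuousLinearMap.ext fun v => by simp)
      (mem_ball_zero_iff.mpr hy) (Metric.mem_ball_self one_pos)
  have hf0 : f 0 = 1 := by
    rw [hfy 0]
    rw [tsum_eq_single 0 (fun k hk => by simp [zero_pow hk])]
    simp [B_zero]
  have hφy : ∀ y : ℂ, φ y = f y * Complex.exp (w * Complex.log (1 - y)) := fun _ => rfl
  have hφ0 : φ 0 = 1 := by
    rw [hφy 0, hf0, sub_zero, Complex.log_one, mul_zero, Complex.exp_zero, one_mul]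
  have hφz : f z * Complex.exp (w * Complex.log (1 - z)) = 1 := by
    have h6 := hconst z hz
    rw [hφ0, hφy z] at h6
    exact h6
  have hfz : f z = (Complex.exp (w * Complex.log (1 - z)))⁻¹ :=
    eq_inv_of_mul_eq_one_left hφz
  rw [← hfy z, hfz, Complex.cpow_def_of_ne_zero (hne z hz)]
  rw [show Complex.log (1 - z) * (-w) = -(w * Complex.log (1 - z)) by ring, Complex.exp_neg]

end EulerTrAux


open EulerTrAux in
/-- Euler's transformation `₂F₁(a,b;c;t) = (1-t)^{c-a-b} ₂F₁(c-a,c-b;c;t)` for `|t| < 1`,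
`c` not a nonpositive integer, and convergent series. -/
theorem stmt18 (a b c t : ℂ) (ht : ‖t‖ < 1) (hc : ∀ n : ℕ, c ≠ -(n : ℂ))
    (h1 : Summable fun k : ℕ =>
      (ascPochhammer ℂ k).eval a * (ascPochhammer ℂ k).eval b /
        ((ascPochhammer ℂ k).eval c * (k.factorial : ℂ)) * t ^ k)
    (h2 : Summable fun k : ℕ =>
      (ascPochhammer ℂ k).eval (c - a) * (ascPochhammer ℂ k).eval (c - b) /
        ((ascPochhammer ℂ k).eval c * (k.factorial : ℂ)) * t ^ k) :
    (∑' k : ℕ, (ascPochhammer ℂ k).eval a * (ascPochhammer ℂ k).eval b /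
        ((ascPochhammer ℂ k).eval c * (k.factorial : ℂ)) * t ^ k) =
      (1 - t) ^ (c - a - b) *
        ∑' k : ℕ, (ascPochhammer ℂ k).eval (c - a) * (ascPochhammer ℂ k).eval (c - b) /
          ((ascPochhammer ℂ k).eval c * (k.factorial : ℂ)) * t ^ k := by
  have hv : Summable fun k : ℕ => ‖V (c-a) (c-b) c k * t ^ k‖ :=
    summable_norm_V (c-a) (c-b) c hc ht
  have hβ : Summable fun j : ℕ => ‖B (a+b-c) j * t ^ j‖ :=
    summable_norm_B (a+b-c) ht
  have cauchy := tsum_mul_tsum_eq_tsum_sum_range_of_summable_norm hv hβ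
  have hconv : ∀ n : ℕ, ∑ k ∈ Finset.range (n+1),
      B (a+b-c) (n-k) * V (c-a) (c-b) c k = V a b c n := by
    intro n
    have h := conv_eq (c-a) (c-b) c hc n
    rw [show c-(c-a)-(c-b) = a+b-c by ring, show c-(c-a) = a by ring,
      show c-(c-b) = b by ring] at h
    exact h
  have hinner : ∀ n : ℕ, (∑ k ∈ Finset.range (n+1),
      (V (c-a) (c-b) c k * t ^ k) * (B (a+b-c) (n-k) * t ^ (n-k)))
      = V a b c n * t ^ n := by
    intro n
    rw [← hconv n, Finset.sum_mul]
    apply Finset.sum_congr rfl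
    intro k hk
    have hkn : k ≤ n := Nat.lt_succ_iff.mp (Finset.mem_range.mp hk)
    have hpow : t ^ k * t ^ (n-k) = t ^ n := by
      rw [← pow_add]
      congr 1
      omega
    calc (V (c-a) (c-b) c k * t ^ k) * (B (a+b-c) (n-k) * t ^ (n-k))
        = B (a+b-c) (n-k) * V (c-a) (c-b) c k * (t ^ k * t ^ (n-k)) := by ring
      _ = B (a+b-c) (n-k) * V (c-a) (c-b) c k * t ^ n := by rw [hpow]
  have hbin : (∑' j : ℕ, B (a+b-c) j * t ^ j) = (1-t) ^ (c-a-b) := by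
    rw [binom_tsum (a+b-c) ht]
    congr 1
    ring
  calc (∑' k : ℕ, (ascPochhammer ℂ k).eval a * (ascPochhammer ℂ k).eval b /
        ((ascPochhammer ℂ k).eval c * (k.factorial : ℂ)) * t ^ k)
      = ∑' n : ℕ, V a b c n * t ^ n := by
        apply tsum_congr
        intro k
        rfl
    _ = ∑' n : ℕ, ∑ k ∈ Finset.range (n+1),
          (V (c-a) (c-b) c k * t ^ k) * (B (a+b-c) (n-k) * t ^ (n-k)) :=
        (tsum_congr hinner).symm
    _ = (∑' k : ℕ, V (c-a) (c-b) c k * t ^ k) * (∑' j : ℕ, B (a+b-c) j * t ^ j) :=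
        cauchy.symm
    _ = (1 - t) ^ (c - a - b) *
        ∑' k : ℕ, (ascPochhammer ℂ k).eval (c - a) * (ascPochhammer ℂ k).eval (c - b) /
          ((ascPochhammer ℂ k).eval c * (k.factorial : ℂ)) * t ^ k := by
        rw [hbin, mul_comm]
        rfl
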